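/- The number of (not necessarily reduced) 2×n Latin rectangles equals n! · D(n), and satisfies L_2(n) = Σ_{s_{00}+s_{10}+s_{01}+s_{11}=n} (-1)^{s_{10}+s_{01}+2s_{11}} · multinomial(n; s_{00},s_{10},s_{01},s_{11}) · [(s_{00}+s_{10})(s_{00}+s_{01}) - s_{00}]^n. -/

import Mathlib

open Finset

def llGood (n : ℕ) (A B : Finset (Fin n)) : Finset (Fin n × Fin n) :=
  (Aᶜ ×ˢ Bᶜ).filter fun p => p.1 ≠ p.2

lemma mem_llGood {n : ℕ} {A B : Finset (Fin n)} {p : Fin n × Fin n} :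
    p ∈ llGood n A B ↔ p.1 ∉ A ∧ p.2 ∉ B ∧ p.1 ≠ p.2 := by
  simp [llGood, and_assoc]

lemma llGood_card {n : ℕ} (A B : Finset (Fin n)) :
    ((llGood n A B).card : ℤ) =
      ((n : ℤ) - A.card) * ((n : ℤ) - B.card) - ((n : ℤ) - (A ∪ B).card) := by
  have hdiag : ((Aᶜ ×ˢ Bᶜ).filter fun p : Fin n × Fin n => ¬ p.1 ≠ p.2).card
      = ((A ∪ B)ᶜ).card := by
    apply Finset.card_bij (fun p _ => p.1)
    · intro p hp
      simp only [mem_filter, mem_product, not_ne_iff] at hp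
      simp [compl_union, mem_inter, hp.1.1, hp.2 ▸ hp.1.2]
    · intro p hp q hq h
      simp only [mem_filter, not_ne_iff] at hp hq
      exact Prod.ext h (by rw [← hp.2, ← hq.2, h])
    · intro d hd
      simp only [compl_union, mem_inter] at hd
      exact ⟨(d, d), by simp [mem_filter, mem_product, hd.1, hd.2], rfl⟩
  have hsplit := Finset.card_filter_add_card_filter_not
    (s := Aᶜ ×ˢ Bᶜ) (fun p : Fin n × Fin n => p.1 ≠ p.2)
  rw [hdiag, Finset.card_product] at hsplit
  have hA : A.card ≤ n := by simpa using A.card_le_univ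
  have hB : B.card ≤ n := by simpa using B.card_le_univ
  have hAB : (A ∪ B).card ≤ n := by simpa using (A ∪ B).card_le_univ
  have hcA : (Aᶜ.card : ℤ) = (n : ℤ) - A.card := by
    rw [Finset.card_compl]; simp; omega
  have hcB : (Bᶜ.card : ℤ) = (n : ℤ) - B.card := by
    rw [Finset.card_compl]; simp; omega
  have hcAB : (((A ∪ B)ᶜ).card : ℤ) = (n : ℤ) - (A ∪ B).card := by
    rw [Finset.card_compl]; simp; omega
  have := congrArg (fun k : ℕ => (k : ℤ)) hsplit
  push_cast at this
  rw [hcA, hcB, hcAB] at this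
  show ((((Aᶜ ×ˢ Bᶜ).filter fun p : Fin n × Fin n => p.1 ≠ p.2)).card : ℤ) = _
  linarith

abbrev FF (n : ℕ) := (Fin n → Fin n) × (Fin n → Fin n)

lemma llPow (n : ℕ) (A B : Finset (Fin n)) :
    (univ.filter fun fg : FF n => ∀ j, (fg.1 j, fg.2 j) ∈ llGood n A B).card
      = (llGood n A B).card ^ n := by
  have e : {fg : FF n // ∀ j, (fg.1 j, fg.2 j) ∈ llGood n A B}
      ≃ (Fin n → {p // p ∈ llGood n A B}) :=
    { toFun := fun x j => ⟨(x.1.1 j, x.1.2 j), x.2 j⟩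
      invFun := fun h => ⟨(fun j => (h j).1.1, fun j => (h j).1.2), fun j => by
        simp⟩
      left_inv := fun x => rfl
      right_inv := fun h => by ext j <;> rfl }
  rw [← Fintype.card_subtype, Fintype.card_congr e, Fintype.card_fun,
    Fintype.card_coe, Fintype.card_fin]

lemma bool3 (p q r : Prop) [Decidable p] [Decidable q] [Decidable r] :
    (if p ∧ q ∧ r then (1:ℤ) else 0)
      = (if p then 1 else 0) * ((if q then 1 else 0) * (if r then 1 else 0)) := by
  split_ifs <;> simp_all

lemma ie_single (n : ℕ) (f : Fin n → Fin n) :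
    ∑ A : Finset (Fin n), (-1:ℤ)^A.card * (if ∀ j, f j ∉ A then 1 else 0)
      = if Function.Surjective f then 1 else 0 := by
  have h1 : ∀ A : Finset (Fin n), (∀ j, f j ∉ A) ↔ A ∈ ((image f univ)ᶜ).powerset := by
    intro A
    simp only [mem_powerset]
    constructor
    · intro h a ha
      simp only [mem_compl, mem_image, mem_univ, true_and, not_exists]
      intro j hj
      exact h j (hj ▸ ha)
    · intro h j hj
      have := h hj
      simp only [mem_compl, mem_image, mem_univ, true_and, not_exists] at this
      exact this j rfl
  calc ∑ A : Finset (Fin n), (-1:ℤ)^A.card * (if ∀ j, f j ∉ A then 1 else 0)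
      = ∑ A : Finset (Fin n), (if A ∈ ((image f univ)ᶜ).powerset then (-1:ℤ)^A.card else 0) := by
        refine sum_congr rfl fun A _ => ?_
        rw [mul_ite, mul_one, mul_zero]
        exact if_congr (h1 A) rfl rfl
    _ = ∑ A ∈ ((image f univ)ᶜ).powerset, (-1:ℤ)^A.card := by
        rw [Finset.sum_ite_mem, univ_inter]
    _ = if (image f univ)ᶜ = ∅ then 1 else 0 := Finset.sum_powerset_neg_one_pow_card
    _ = if Function.Surjective f then 1 else 0 := by
        have h2 : (image f univ)ᶜ = ∅ ↔ image f univ = univ := by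
          constructor
          · intro h; rw [← compl_compl (image f univ), h, compl_empty]
          · intro h; rw [h, compl_univ]
        refine if_congr (h2.trans ?_) rfl rfl
        rw [Finset.eq_univ_iff_forall]
        simp [Function.Surjective, eq_comm]

lemma key (n : ℕ) :
    ∑ A : Finset (Fin n), ∑ B : Finset (Fin n),
        (-1:ℤ)^(A.card + B.card) * ((llGood n A B).card : ℤ)^n
      = ((univ.filter fun fg : FF n => Function.Bijective fg.1 ∧ Function.Bijective fg.2
          ∧ ∀ j, fg.1 j ≠ fg.2 j).card : ℤ) := by
  have hpow : ∀ A B : Finset (Fin n), ((llGood n A B).card : ℤ)^n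
      = ∑ fg : FF n, (if ∀ j, fg.1 j ∉ A then (1:ℤ) else 0) *
          ((if ∀ j, fg.2 j ∉ B then (1:ℤ) else 0) *
           (if ∀ j, fg.1 j ≠ fg.2 j then (1:ℤ) else 0)) := by
    intro A B
    rw [← Nat.cast_pow, ← llPow n A B, Finset.card_filter]
    push_cast
    refine sum_congr rfl fun fg _ => ?_
    have : (∀ j, (fg.1 j, fg.2 j) ∈ llGood n A B)
        ↔ (∀ j, fg.1 j ∉ A) ∧ (∀ j, fg.2 j ∉ B) ∧ (∀ j, fg.1 j ≠ fg.2 j) := by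
      simp only [mem_llGood]
      rw [forall_and, forall_and]
    rw [if_congr this rfl rfl, bool3]
  calc ∑ A : Finset (Fin n), ∑ B : Finset (Fin n),
        (-1:ℤ)^(A.card + B.card) * ((llGood n A B).card : ℤ)^n
      = ∑ A : Finset (Fin n), ∑ B : Finset (Fin n), ∑ fg : FF n,
          ((-1:ℤ)^A.card * (if ∀ j, fg.1 j ∉ A then (1:ℤ) else 0)) *
          (((-1:ℤ)^B.card * (if ∀ j, fg.2 j ∉ B then (1:ℤ) else 0)) *
           (if ∀ j, fg.1 j ≠ fg.2 j then (1:ℤ) else 0)) := by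
        refine sum_congr rfl fun A _ => sum_congr rfl fun B _ => ?_
        rw [hpow A B, mul_sum]
        refine sum_congr rfl fun fg _ => ?_
        rw [pow_add]; ring
    _ = ∑ fg : FF n, ∑ A : Finset (Fin n), ∑ B : Finset (Fin n),
          ((-1:ℤ)^A.card * (if ∀ j, fg.1 j ∉ A then (1:ℤ) else 0)) *
          (((-1:ℤ)^B.card * (if ∀ j, fg.2 j ∉ B then (1:ℤ) else 0)) *
           (if ∀ j, fg.1 j ≠ fg.2 j then (1:ℤ) else 0)) := by
        exact Eq.trans (sum_congr rfl fun A _ => Finset.sum_comm) Finset.sum_comm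
    _ = ∑ fg : FF n,
          (if Function.Surjective fg.1 then (1:ℤ) else 0) *
          ((if Function.Surjective fg.2 then (1:ℤ) else 0) *
           (if ∀ j, fg.1 j ≠ fg.2 j then (1:ℤ) else 0)) := by
        refine sum_congr rfl fun fg _ => ?_
        rw [← ie_single n fg.1, ← ie_single n fg.2]
        simp only [Finset.sum_mul, Finset.mul_sum]
        exact Finset.sum_comm
    _ = ∑ fg : FF n, (if Function.Bijective fg.1 ∧ Function.Bijective fg.2
          ∧ ∀ j, fg.1 j ≠ fg.2 j then (1:ℤ) else 0) := by
        refine sum_congr rfl fun fg _ => ?_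
        rw [bool3]
        simp only [Finite.surjective_iff_bijective]
    _ = ((univ.filter fun fg : FF n => Function.Bijective fg.1 ∧ Function.Bijective fg.2
          ∧ ∀ j, fg.1 j ≠ fg.2 j).card : ℤ) := by
        rw [Finset.card_filter]; push_cast; rfl

def llVec (n : ℕ) (AB : Finset (Fin n) × Finset (Fin n)) : Fin 4 → ℕ :=
  ![n - (AB.1 ∪ AB.2).card, (AB.1 \ AB.2).card, (AB.2 \ AB.1).card, (AB.1 ∩ AB.2).card]

lemma ll_cards {n : ℕ} (A B : Finset (Fin n)) :
    (A \ B).card + (A ∩ B).card = A.card ∧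
    (B \ A).card + (A ∩ B).card = B.card ∧
    (A ∪ B).card + (A ∩ B).card = A.card + B.card ∧
    (A ∪ B).card ≤ n := by
  refine ⟨?_, ?_, card_union_add_card_inter A B, by simpa using (A ∪ B).card_le_univ⟩
  · rw [add_comm]; exact card_inter_add_card_sdiff A B
  · rw [add_comm, inter_comm]; exact card_inter_add_card_sdiff B A

lemma fiber_count (n : ℕ) (s : Fin 4 → ℕ) (hs : s 0 + s 1 + s 2 + s 3 = n) :
    (univ.filter fun AB : Finset (Fin n) × Finset (Fin n) => llVec n AB = s).card
      = Nat.multinomial univ s := by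
  have hcond : ∀ AB : Finset (Fin n) × Finset (Fin n), llVec n AB = s ↔
      ((AB.1 \ AB.2).card = s 1 ∧ (AB.2 \ AB.1).card = s 2 ∧ (AB.1 ∩ AB.2).card = s 3) := by
    intro AB
    obtain ⟨c1, c2, c3, c4⟩ := ll_cards AB.1 AB.2
    constructor
    · intro h
      refine ⟨?_, ?_, ?_⟩ <;> rw [← h] <;> simp [llVec]
    · rintro ⟨h1, h2, h3⟩
      funext i
      fin_cases i <;> simp [llVec, h1, h2, h3] <;> omega
  rw [filter_congr fun AB _ => hcond AB]
  rw [Finset.card_eq_sum_card_fiberwise (f := fun AB : Finset (Fin n) × Finset (Fin n) =>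
      AB.1 ∩ AB.2) (t := powersetCard (s 3) univ)
      (fun AB hAB => by rw [Finset.mem_coe, mem_powersetCard_univ]; exact ((mem_filter.1 hAB).2).2.2)]
  have inner : ∀ C ∈ powersetCard (s 3) univ,
      ((univ.filter fun AB : Finset (Fin n) × Finset (Fin n) =>
        ((AB.1 \ AB.2).card = s 1 ∧ (AB.2 \ AB.1).card = s 2 ∧ (AB.1 ∩ AB.2).card = s 3)).filter
        fun AB => AB.1 ∩ AB.2 = C).card
      = (n - s 3).choose (s 1) * (n - s 3 - s 1).choose (s 2) := by
    intro C hC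
    rw [mem_powersetCard_univ] at hC
    rw [filter_filter]
    rw [Finset.card_eq_sum_card_fiberwise (f := fun AB : Finset (Fin n) × Finset (Fin n) =>
        AB.1 \ AB.2) (t := powersetCard (s 1) Cᶜ)
        (fun AB hAB => by
          obtain ⟨hcnd, h2⟩ := (mem_filter.1 hAB).2
          rw [Finset.mem_coe, mem_powersetCard]
          constructor
          · intro x hx
            rw [mem_compl, ← h2]
            simp only [mem_inter, mem_sdiff] at hx ⊢
            tauto
          · exact hcnd.1)]
    have inner2 : ∀ D ∈ powersetCard (s 1) Cᶜ,
        ((univ.filter fun AB : Finset (Fin n) × Finset (Fin n) =>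
          (((AB.1 \ AB.2).card = s 1 ∧ (AB.2 \ AB.1).card = s 2 ∧ (AB.1 ∩ AB.2).card = s 3) ∧
            AB.1 ∩ AB.2 = C)).filter fun AB => AB.1 \ AB.2 = D).card
        = (n - s 3 - s 1).choose (s 2) := by
      intro D hD
      rw [filter_filter, mem_powersetCard] at *
      obtain ⟨hDsub, hDcard⟩ := hD
      have hDC : ∀ x, x ∈ D → x ∉ C := fun x hx => by simpa using hDsub hx
      have hdisjCD : Disjoint C D := disjoint_left.mpr fun x hxC hxD => hDC x hxD hxC
      have hcard : ((C ∪ D)ᶜ).card = n - s 3 - s 1 := by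
        rw [card_compl, card_union_of_disjoint hdisjCD, hC, hDcard, Fintype.card_fin]
        omega
      rw [← hcard, ← Finset.card_powersetCard]
      apply Finset.card_bij (fun AB _ => AB.2 \ AB.1)
      · rintro ⟨A, B⟩ hAB
        simp only [mem_filter, mem_univ, true_and] at hAB
        obtain ⟨⟨⟨-, h2, -⟩, hCi⟩, hDi⟩ := hAB
        rw [mem_powersetCard]
        refine ⟨fun x hx => ?_, h2⟩
        simp only [mem_compl, mem_union, ← hCi, ← hDi, mem_inter, mem_sdiff] at hx ⊢
        tauto
      · rintro ⟨A, B⟩ hAB ⟨A', B'⟩ hAB' h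
        simp only [mem_filter, mem_univ, true_and] at hAB hAB'
        obtain ⟨⟨-, hCi⟩, hDi⟩ := hAB
        obtain ⟨⟨-, hCi'⟩, hDi'⟩ := hAB'
        have hA : A = A' := by
          have e1 : A = C ∪ D := by
            rw [← hCi, ← hDi]; ext x
            simp only [mem_union, mem_inter, mem_sdiff]; tauto
          have e2 : A' = C ∪ D := by
            rw [← hCi', ← hDi']; ext x
            simp only [mem_union, mem_inter, mem_sdiff]; tauto
          rw [e1, e2]
        have hB : B = B' := by
          have e1 : B = C ∪ (B \ A) := by
            rw [← hCi]; ext x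
            simp only [mem_union, mem_inter, mem_sdiff]; tauto
          have e2 : B' = C ∪ (B' \ A') := by
            rw [← hCi']; ext x
            simp only [mem_union, mem_inter, mem_sdiff]; tauto
          rw [e1, e2, h]
        exact Prod.ext hA hB
      · intro E hE
        rw [mem_powersetCard] at hE
        have hECD : ∀ x, x ∈ E → x ∉ C ∧ x ∉ D := fun x hx => by
          have := hE.1 hx; simp only [mem_compl, mem_union, not_or] at this; tauto
        have hsd2 : (C ∪ E) \ (C ∪ D) = E := by
          ext x; simp only [mem_sdiff, mem_union, not_or]
          constructor
          · rintro ⟨h1 | h1, h2, h3⟩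
            · exact absurd h1 h2
            · exact h1
          · intro h
            exact ⟨Or.inr h, (hECD x h).1, (hECD x h).2⟩
        refine ⟨(C ∪ D, C ∪ E), ?_, hsd2⟩
        simp only [mem_filter, mem_univ, true_and]
        have hint : (C ∪ D) ∩ (C ∪ E) = C := by
          ext x; simp only [mem_inter, mem_union]
          constructor
          · rintro ⟨h1 | h1, h2 | h2⟩
            · exact h1
            · exact h1
            · exact h2
            · exact absurd h1 ((hECD x h2).2).elim
          · intro h; exact ⟨Or.inl h, Or.inl h⟩
        have hsd1 : (C ∪ D) \ (C ∪ E) = D := by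
          ext x; simp only [mem_sdiff, mem_union, not_or]
          constructor
          · rintro ⟨h1 | h1, h2, h3⟩
            · exact absurd h1 h2
            · exact h1
          · intro h
            exact ⟨Or.inr h, hDC x h, fun hx => (hECD x hx).2 h⟩
        exact ⟨⟨⟨by rw [hsd1, hDcard], by rw [hsd2, hE.2], by rw [hint, hC]⟩, hint⟩, hsd1⟩
    rw [Finset.sum_congr rfl inner2, Finset.sum_const, Finset.card_powersetCard,
      card_compl, hC, Fintype.card_fin, smul_eq_mul]
  rw [Finset.sum_congr rfl inner, Finset.sum_const, Finset.card_powersetCard,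
    card_univ, Fintype.card_fin, smul_eq_mul]
  have huniv : (univ : Finset (Fin 4)) = insert 3 (insert 1 (insert 2 {0})) := by decide
  rw [huniv, Nat.multinomial_insert (by decide), Nat.multinomial_insert (by decide),
    Nat.multinomial_insert (by decide), Nat.multinomial_singleton,
    Finset.sum_insert (by decide), Finset.sum_insert (by decide), Finset.sum_singleton]
  have e1 : s 3 + (s 1 + (s 2 + s 0)) = n := by omega
  have e2 : s 1 + (s 2 + s 0) = n - s 3 := by omega
  have e3 : s 2 + s 0 = n - s 3 - s 1 := by omega
  rw [e1, e2, e3]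
  ring

theorem two_line_latin_formula (n : ℕ) :
    Nat.card {p : Equiv.Perm (Fin n) × Equiv.Perm (Fin n) // ∀ j, p.1 j ≠ p.2 j} =
        n.factorial * numDerangements n ∧
    (Nat.card {p : Equiv.Perm (Fin n) × Equiv.Perm (Fin n) // ∀ j, p.1 j ≠ p.2 j} : ℤ) =
      ∑ s ∈ Finset.Nat.antidiagonalTuple 4 n,
        (-1 : ℤ) ^ (s 1 + s 2 + 2 * s 3) *
          (Nat.multinomial Finset.univ s : ℤ) *
          (((s 0 : ℤ) + s 1) * ((s 0 : ℤ) + s 2) - s 0) ^ n := by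
  constructor
  · rw [Nat.card_eq_fintype_card]
    have e1 : {p : Equiv.Perm (Fin n) × Equiv.Perm (Fin n) // ∀ j, p.1 j ≠ p.2 j} ≃
        Equiv.Perm (Fin n) × derangements (Fin n) :=
      { toFun := fun p => (p.1.2, ⟨p.1.2⁻¹ * p.1.1, fun x h => p.2 x (by
          have := congrArg p.1.2 h
          simpa using this)⟩)
        invFun := fun q => ⟨(q.1 * q.2.1, q.1), fun x h => q.2.2 x (q.1.injective h)⟩
        left_inv := fun p => Subtype.ext (Prod.ext (by simp [mul_assoc]) rfl)
        right_inv := fun q => by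
          refine Prod.ext rfl (Subtype.ext ?_)
          simp [← mul_assoc] }
    rw [Fintype.card_congr e1, Fintype.card_prod, Fintype.card_perm,
      card_derangements_eq_numDerangements, Fintype.card_fin]
  · -- cardinality as a filter over pairs of functions
    have e2 : {p : Equiv.Perm (Fin n) × Equiv.Perm (Fin n) // ∀ j, p.1 j ≠ p.2 j} ≃
        {fg : FF n // Function.Bijective fg.1 ∧ Function.Bijective fg.2
          ∧ ∀ j, fg.1 j ≠ fg.2 j} :=
      { toFun := fun p => ⟨(p.1.1, p.1.2), p.1.1.bijective, p.1.2.bijective, p.2⟩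
        invFun := fun q => ⟨(Equiv.ofBijective _ q.2.1, Equiv.ofBijective _ q.2.2.1),
          q.2.2.2⟩
        left_inv := fun p => Subtype.ext (Prod.ext (Equiv.ext fun x => rfl)
          (Equiv.ext fun x => rfl))
        right_inv := fun q => rfl }
    have hL : Nat.card {p : Equiv.Perm (Fin n) × Equiv.Perm (Fin n) // ∀ j, p.1 j ≠ p.2 j}
        = (univ.filter fun fg : FF n => Function.Bijective fg.1 ∧ Function.Bijective fg.2
            ∧ ∀ j, fg.1 j ≠ fg.2 j).card := by
      rw [Nat.card_eq_fintype_card, Fintype.card_congr e2, Fintype.card_subtype]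
    rw [hL, ← key n]
    -- per-term rewrite
    have hterm : ∀ A B : Finset (Fin n),
        (-1:ℤ)^(A.card + B.card) * ((llGood n A B).card : ℤ)^n
          = (-1:ℤ)^(llVec n (A,B) 1 + llVec n (A,B) 2 + 2 * llVec n (A,B) 3) *
            (((llVec n (A,B) 0 : ℤ) + llVec n (A,B) 1) *
              ((llVec n (A,B) 0 : ℤ) + llVec n (A,B) 2) - (llVec n (A,B) 0 : ℤ))^n := by
      intro A B
      obtain ⟨c1, c2, c3, c4⟩ := ll_cards A B
      have v0 : llVec n (A, B) 0 = n - (A ∪ B).card := by simp [llVec]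
      have v1 : llVec n (A, B) 1 = (A \ B).card := by simp [llVec]
      have v2 : llVec n (A, B) 2 = (B \ A).card := by simp [llVec]
      have v3 : llVec n (A, B) 3 = (A ∩ B).card := by simp [llVec]
      rw [v0, v1, v2, v3]
      congr 1
      · congr 1
        omega
      · rw [llGood_card]
        have e1 : (n : ℤ) - A.card = ((n - (A ∪ B).card : ℕ) : ℤ) + ((B \ A).card : ℤ) := by
          omega
        have e2 : (n : ℤ) - B.card = ((n - (A ∪ B).card : ℕ) : ℤ) + ((A \ B).card : ℤ) := by
          omega
        have e3 : (n : ℤ) - ((A ∪ B).card : ℤ) = ((n - (A ∪ B).card : ℕ) : ℤ) := by omega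
        rw [e1, e2, e3]
        ring
    calc ∑ A : Finset (Fin n), ∑ B : Finset (Fin n),
          (-1:ℤ)^(A.card + B.card) * ((llGood n A B).card : ℤ)^n
        = ∑ AB : Finset (Fin n) × Finset (Fin n),
            (-1:ℤ)^(llVec n AB 1 + llVec n AB 2 + 2 * llVec n AB 3) *
            (((llVec n AB 0 : ℤ) + llVec n AB 1) *
              ((llVec n AB 0 : ℤ) + llVec n AB 2) - (llVec n AB 0 : ℤ))^n := by
          rw [Fintype.sum_prod_type]
          exact Finset.sum_congr rfl fun A _ => Finset.sum_congr rfl fun B _ => hterm A B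
      _ = ∑ s ∈ Finset.Nat.antidiagonalTuple 4 n,
            (-1 : ℤ) ^ (s 1 + s 2 + 2 * s 3) *
              (Nat.multinomial Finset.univ s : ℤ) *
              (((s 0 : ℤ) + s 1) * ((s 0 : ℤ) + s 2) - s 0) ^ n := by
          have hmaps : ∀ AB ∈ (univ : Finset (Finset (Fin n) × Finset (Fin n))),
              llVec n AB ∈ Finset.Nat.antidiagonalTuple 4 n := by
            intro AB _
            rw [Finset.Nat.mem_antidiagonalTuple, Fin.sum_univ_four]
            obtain ⟨c1, c2, c3, c4⟩ := ll_cards AB.1 AB.2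
            have v0 : llVec n AB 0 = n - (AB.1 ∪ AB.2).card := by simp [llVec]
            have v1 : llVec n AB 1 = (AB.1 \ AB.2).card := by simp [llVec]
            have v2 : llVec n AB 2 = (AB.2 \ AB.1).card := by simp [llVec]
            have v3 : llVec n AB 3 = (AB.1 ∩ AB.2).card := by simp [llVec]
            rw [v0, v1, v2, v3]
            omega
          rw [← Finset.sum_fiberwise_of_maps_to hmaps (fun AB =>
            (-1:ℤ)^(llVec n AB 1 + llVec n AB 2 + 2 * llVec n AB 3) *
            (((llVec n AB 0 : ℤ) + llVec n AB 1) *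
              ((llVec n AB 0 : ℤ) + llVec n AB 2) - (llVec n AB 0 : ℤ))^n)]
          refine Finset.sum_congr rfl fun s hs => ?_
          have hsum : s 0 + s 1 + s 2 + s 3 = n := by
            have := Finset.Nat.mem_antidiagonalTuple.1 hs
            rw [Fin.sum_univ_four] at this
            exact this
          have : ∀ AB ∈ (univ.filter fun AB : Finset (Fin n) × Finset (Fin n) =>
              llVec n AB = s),
              (-1:ℤ)^(llVec n AB 1 + llVec n AB 2 + 2 * llVec n AB 3) *
              (((llVec n AB 0 : ℤ) + llVec n AB 1) *
                ((llVec n AB 0 : ℤ) + llVec n AB 2) - (llVec n AB 0 : ℤ))^n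
              = (-1:ℤ)^(s 1 + s 2 + 2 * s 3) *
                (((s 0 : ℤ) + s 1) * ((s 0 : ℤ) + s 2) - (s 0 : ℤ))^n := by
            intro AB hAB
            rw [(mem_filter.1 hAB).2]
          rw [Finset.sum_congr rfl this, Finset.sum_const, fiber_count n s hsum,
            nsmul_eq_mul]
          ring
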